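/- Let T be a tree on n ≥ 4 vertices that is not a star. Then the algebraic connectivity (second smallest Laplacian eigenvalue) of T satisfies λ₂(L(T)) < 0.59. -/

import Mathlib

open SimpleGraph Matrix Finset

/-- `G` is a star graph: some center is adjacent exactly to all other
vertices, and there are no other edges. -/
def IsStar {V : Type*} (G : SimpleGraph V) : Prop :=
  ∃ c : V, ∀ u v : V, G.Adj u v ↔ (u = c ∧ v ≠ c) ∨ (v = c ∧ u ≠ c)

lemma no_reach_of_path {V : Type*} {G : SimpleGraph V} (htree : G.IsTree) (s : Set (Sym2 V))
    [DecidableEq V] {x y : V} (p : G.Walk x y) (hp : p.IsPath) (e : Sym2 V) (he : e ∈ p.edges)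
    (hes : e ∈ s) : ¬ (G.deleteEdges s).Reachable x y := by
  rintro ⟨q0⟩
  obtain ⟨q, hq⟩ := q0.toPath
  have hsub : ∀ e' ∈ q.edges, e' ∈ G.edgeSet := by
    intro e' he'
    have := q.edges_subset_edgeSet he'
    rw [edgeSet_deleteEdges] at this
    exact this.1
  have hq2 : (q.transfer G hsub).IsPath := hq.transfer hsub
  have := (htree.existsUnique_path x y).unique hp hq2
  rw [this] at he
  rw [q.edges_transfer hsub] at he
  have := q.edges_subset_edgeSet he
  rw [edgeSet_deleteEdges] at this
  exact this.2 hes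

lemma exists_P4 {n : ℕ} (hn : 3 ≤ n) (G : SimpleGraph (Fin n)) [DecidableRel G.Adj]
    (htree : G.IsTree) (hstar : ¬ IsStar G) :
    ∃ a b c d : Fin n, G.Adj a b ∧ G.Adj b c ∧ G.Adj c d ∧
      a ≠ b ∧ a ≠ c ∧ a ≠ d ∧ b ≠ c ∧ b ≠ d ∧ c ≠ d := by
  classical
  have hconn : G.Connected := htree.isConnected
  -- a vertex of degree ≥ 2
  have hcard : Fintype.card (Fin n) = n := Fintype.card_fin n
  have hdeg : ∃ v : Fin n, 2 ≤ G.degree v := by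
    by_contra h
    push_neg at h
    have hsum : ∑ v : Fin n, G.degree v = 2 * G.edgeFinset.card :=
      G.sum_degrees_eq_twice_card_edges
    have hedges : G.edgeFinset.card + 1 = n := by
      rw [htree.card_edgeFinset, hcard]
    have hle : ∑ v : Fin n, G.degree v ≤ ∑ _v : Fin n, 1 :=
      Finset.sum_le_sum fun v _ => Nat.lt_succ_iff.mp (h v)
    simp only [Finset.sum_const, Finset.card_univ, hcard, smul_eq_mul, mul_one] at hle
    omega
  obtain ⟨c0, hc0⟩ := hdeg
  -- key property if no P3 centered appropriately
  by_contra hno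
  push_neg at hno
  -- every neighbor u of c0 has c0 as unique neighbor... first, derive "key"
  have key : ∀ b c : Fin n, G.Adj b c →
      (∀ a, G.Adj a b → a = c) ∨ (∀ d, G.Adj d c → d = b) := by
    intro b c hbc
    by_contra hk
    push_neg at hk
    obtain ⟨⟨a, hab, hac⟩, ⟨d, hdc, hdb⟩⟩ := hk
    -- build P4 : a - b - c - d
    have h1 : G.Adj a b := hab
    have h2 : G.Adj b c := hbc
    have h3 : G.Adj c d := hdc.symm
    have hne_ab : a ≠ b := h1.ne
    have hne_bc : b ≠ c := h2.ne
    have hne_cd : c ≠ d := h3.ne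
    have had : a ≠ d := by
      intro hEq
      subst hEq
      -- two paths from b to c: direct edge and via a
      have hp1 : (Walk.cons h2 Walk.nil : G.Walk b c).IsPath := by
        simp [Walk.isPath_def, h2.ne]
      have hp2 : (Walk.cons h1.symm (Walk.cons hdc Walk.nil) : G.Walk b c).IsPath := by
        simp [Walk.isPath_def, h1.ne', hne_bc, hac]
      have := (htree.existsUnique_path b c).unique hp1 hp2
      simp at this
      exact hne_cd this.1
    exact hne_cd (hno a b c d h1 h2 h3 hne_ab hac had hne_bc hdb.symm)
  apply hstar
  have hnb : 1 < (G.neighborFinset c0).card := hc0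
  obtain ⟨x, hx, y, hy, hxy⟩ := Finset.one_lt_card.mp hnb
  rw [mem_neighborFinset] at hx hy
  have star1 : ∀ u, G.Adj c0 u → ∀ d, G.Adj d u → d = c0 := by
    intro u hu d hd
    rcases key c0 u hu with h | h
    · exfalso
      have h1 := h x hx.symm
      have h2 := h y hy.symm
      exact hxy (h1.trans h2.symm)
    · exact h d hd
  have adjc : ∀ q, q ≠ c0 → G.Adj c0 q := by
    have aux : ∀ (q r : Fin n) (p : G.Walk q r), p.IsPath → r = c0 → q ≠ c0 → G.Adj c0 q := by
      intro q r p
      induction p with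
      | nil => intro _ hr hq; exact absurd hr hq
      | @cons q q' r h p ih =>
        intro hp hr hq
        by_cases hq' : q' = c0
        · subst hq'; exact h.symm
        · have hcq' : G.Adj c0 q' := ih hp.of_cons hr hq'
          exact absurd (star1 q' hcq' q h) hq
    intro q hq
    obtain ⟨p, hp, -⟩ := htree.existsUnique_path q c0
    exact aux q c0 p hp rfl hq
  refine ⟨c0, fun u v => ⟨fun huv => ?_, fun h => ?_⟩⟩
  · by_cases hu : u = c0
    · exact Or.inl ⟨hu, by rw [← hu]; exact huv.ne'⟩
    · by_cases hv : v = c0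
      · exact Or.inr ⟨hv, hu⟩
      · exact absurd (star1 v (adjc v hv) u huv) hu
  · rcases h with ⟨rfl, hv⟩ | ⟨rfl, hu⟩
    · exact adjc v hv
    · exact (adjc u hu).symm


lemma rayleigh_bound {n : ℕ} (hn : 0 < n) (G : SimpleGraph (Fin n)) [DecidableRel G.Adj]
    (hconn : G.Connected) (lam2 : ℝ)
    (hlb : ∀ μ : ℝ, μ ≠ 0 → (∃ w : Fin n → ℝ, w ≠ 0 ∧
      (G.lapMatrix ℝ).mulVec w = μ • w) → lam2 ≤ μ)
    (w : Fin n → ℝ) (hw0 : ∑ v, w v = 0) :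
    lam2 * (∑ v, (w v)^2) ≤ w ⬝ᵥ ((G.lapMatrix ℝ) *ᵥ w) := by
  set L := G.lapMatrix ℝ with hLdef
  have hL : L.IsHermitian := (G.posSemidef_lapMatrix ℝ).1
  set B := hL.eigenvectorBasis with hB
  set μ := hL.eigenvalues with hμ
  set W : EuclideanSpace ℝ (Fin n) := WithLp.toLp 2 w with hW
  set c : Fin n → ℝ := fun i => inner (𝕜 := ℝ) (B i) W with hc
  have hdot : ∀ (x y : EuclideanSpace ℝ (Fin n)),
      inner (𝕜 := ℝ) x y = (x : Fin n → ℝ) ⬝ᵥ (y : Fin n → ℝ) := by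
    intro x y
    simp [PiLp.inner_apply, dotProduct, RCLike.inner_apply, mul_comm]
  -- symmetry of L in dot products
  have hsymm : ∀ (x y : Fin n → ℝ), x ⬝ᵥ (L *ᵥ y) = (L *ᵥ x) ⬝ᵥ y := by
    intro x y
    rw [dotProduct_mulVec, ← mulVec_transpose, show Lᵀ = L from G.isSymm_lapMatrix ℝ]
  have heig : ∀ i, L *ᵥ (B i : Fin n → ℝ) = μ i • (B i : Fin n → ℝ) :=
    fun i => hL.mulVec_eigenvectorBasis i
  have hcd : ∀ i, c i = (B i : Fin n → ℝ) ⬝ᵥ w := fun i => hdot (B i) W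
  have h1 : ∀ i, inner (𝕜 := ℝ) (B i) (WithLp.toLp 2 (L *ᵥ w : Fin n → ℝ) : EuclideanSpace ℝ (Fin n))
      = μ i * c i := by
    intro i
    rw [hdot]
    show (B i : Fin n → ℝ) ⬝ᵥ (L *ᵥ w) = _
    rw [hsymm, heig i, smul_dotProduct, smul_eq_mul, hcd i]
  -- Parseval
  have h2 : ∑ i, (c i)^2 = ∑ v, (w v)^2 := by
    have := B.sum_inner_mul_inner W W
    simp only [hdot] at this
    calc ∑ i, (c i)^2 = ∑ i, ((W : Fin n → ℝ) ⬝ᵥ (B i : Fin n → ℝ))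
        * ((B i : Fin n → ℝ) ⬝ᵥ (W : Fin n → ℝ)) := by
          refine Finset.sum_congr rfl fun i _ => ?_
          rw [hcd i, dotProduct_comm ((W : Fin n → ℝ))]
          ring
      _ = (W : Fin n → ℝ) ⬝ᵥ (W : Fin n → ℝ) := this
      _ = ∑ v, (w v)^2 := by simp [dotProduct, sq, hW]
  -- expansion of the quadratic form
  have h3 : w ⬝ᵥ (L *ᵥ w) = ∑ i, μ i * (c i)^2 := by
    have := B.sum_inner_mul_inner W (WithLp.toLp 2 ((L *ᵥ w : Fin n → ℝ)) : EuclideanSpace ℝ (Fin n))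
    rw [hdot] at this
    calc w ⬝ᵥ (L *ᵥ w) = ∑ i, (inner (𝕜 := ℝ) W (B i))
          * (inner (𝕜 := ℝ) (B i) (WithLp.toLp 2 ((L *ᵥ w : Fin n → ℝ)) : EuclideanSpace ℝ (Fin n))) := this.symm
      _ = ∑ i, μ i * (c i)^2 := by
          refine Finset.sum_congr rfl fun i _ => ?_
          rw [h1 i, real_inner_comm, show inner (𝕜 := ℝ) (B i) W = c i from rfl]
          ring
  -- per-eigenvalue bound
  have h4 : ∀ i, lam2 * (c i)^2 ≤ μ i * (c i)^2 := by
    intro i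
    rcases eq_or_ne (μ i) 0 with h0 | h0
    · have hker : L *ᵥ (B i : Fin n → ℝ) = 0 := by rw [heig i, h0, zero_smul]
      have hconst : ∀ v v' : Fin n, (B i : Fin n → ℝ) v = (B i : Fin n → ℝ) v' := by
        have := (G.lapMatrix_mulVec_eq_zero_iff_forall_reachable
          (x := (B i : Fin n → ℝ))).mp hker
        exact fun v v' => this v v' (hconn v v')
      have : c i = 0 := by
        rw [hcd i]
        show ∑ v, (B i : Fin n → ℝ) v * w v = 0
        calc ∑ v, (B i : Fin n → ℝ) v * w v
            = ∑ v, (B i : Fin n → ℝ) ⟨0, hn⟩ * w v :=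
              Finset.sum_congr rfl fun v _ => by rw [hconst v ⟨0, hn⟩]
          _ = 0 := by rw [← Finset.mul_sum, hw0, mul_zero]
      rw [this]
      simp [h0]
    · have hle : lam2 ≤ μ i := by
        refine hlb (μ i) h0 ⟨(B i : Fin n → ℝ), ?_, heig i⟩
        have := B.orthonormal.ne_zero i
        intro hcontra
        apply this
        ext v
        exact congrFun hcontra v
      nlinarith [sq_nonneg (c i)]
  calc lam2 * (∑ v, (w v)^2) = ∑ i, lam2 * (c i)^2 := by rw [← h2, Finset.mul_sum]
    _ ≤ ∑ i, μ i * (c i)^2 := Finset.sum_le_sum fun i _ => h4 i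
    _ = w ⬝ᵥ (L *ᵥ w) := h3.symm


lemma double_sum_pair {n : ℕ} (x y : Fin n) (hxy : x ≠ y) (r : ℝ) :
    ∑ i : Fin n, ∑ j : Fin n, (if (i = x ∧ j = y) ∨ (i = y ∧ j = x) then r else 0) = 2*r := by
  have hsplit : ∀ i j : Fin n, (if (i = x ∧ j = y) ∨ (i = y ∧ j = x) then r else 0)
      = (if i = x ∧ j = y then r else 0) + (if i = y ∧ j = x then r else 0) := by
    intro i j
    by_cases h1 : i = x ∧ j = y <;> by_cases h2 : i = y ∧ j = x
    · exact absurd (h1.1.symm.trans h2.1) hxy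
    · obtain ⟨rfl, rfl⟩ := h1; simp [hxy, hxy.symm]
    · obtain ⟨rfl, rfl⟩ := h2; simp [hxy, hxy.symm]
    · simp [h1, h2]
  simp_rw [hsplit, Finset.sum_add_distrib]
  have e1 : ∀ (p q : Fin n), ∑ i : Fin n, ∑ j : Fin n, (if i = p ∧ j = q then r else 0) = r := by
    intro p q
    have : ∀ i : Fin n, ∑ j : Fin n, (if i = p ∧ j = q then r else 0)
        = (if i = p then r else 0) := by
      intro i
      by_cases h : i = p <;> simp [h, Finset.sum_ite_eq']
    simp_rw [this, Finset.sum_ite_eq']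
    simp
  rw [e1, e1]; ring

set_option maxHeartbeats 1000000 in
/-- a non-star tree on `n ≥ 4` vertices has algebraic
connectivity (second smallest Laplacian eigenvalue) strictly below `0.59`. -/
theorem non_star_tree_lambda2_lt
    {n : ℕ} (hn : 4 ≤ n) (G : SimpleGraph (Fin n)) [DecidableRel G.Adj]
    (htree : G.IsTree) (hstar : ¬ IsStar G)
    (lam2 : ℝ)
    (hlam2 : IsLeast {μ : ℝ | μ ≠ 0 ∧ ∃ w : Fin n → ℝ, w ≠ 0 ∧
      (G.lapMatrix ℝ).mulVec w = μ • w} lam2) :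
    lam2 < 0.59 := by
  classical
  have hconn : G.Connected := htree.isConnected
  obtain ⟨a, b, c, d, hab, hbc, hcd, hne_ab, hne_ac, hne_ad, hne_bc, hne_bd, hne_cd⟩ :=
    exists_P4 (by omega) G htree hstar
  set s : Set (Sym2 (Fin n)) := {s(a,b), s(b,c), s(c,d)} with hs
  set G' := G.deleteEdges s with hG'
  have hmem1 : s(a,b) ∈ s := by simp [hs]
  have hmem2 : s(b,c) ∈ s := by simp [hs]
  have hmem3 : s(c,d) ∈ s := by simp [hs]
  have hba : ¬ G'.Reachable b a :=
    no_reach_of_path htree s (Walk.cons hab.symm Walk.nil)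
      (by simp [Walk.isPath_def, hne_ab.symm]) s(a,b) (by simp [Sym2.eq_swap]) hmem1
  have hca : ¬ G'.Reachable c a :=
    no_reach_of_path htree s (Walk.cons hbc.symm (Walk.cons hab.symm Walk.nil))
      (by simp [Walk.isPath_def, hne_ab.symm, hne_ac.symm, hne_bc.symm]) s(b,c)
      (by simp [Sym2.eq_swap]) hmem2
  have hcb : ¬ G'.Reachable c b :=
    no_reach_of_path htree s (Walk.cons hbc.symm Walk.nil)
      (by simp [Walk.isPath_def, hne_bc.symm]) s(b,c) (by simp [Sym2.eq_swap]) hmem2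
  have hda : ¬ G'.Reachable d a :=
    no_reach_of_path htree s (Walk.cons hcd.symm (Walk.cons hbc.symm (Walk.cons hab.symm Walk.nil)))
      (by simp [Walk.isPath_def, hne_ab.symm, hne_ac.symm, hne_ad.symm, hne_bc.symm,
        hne_bd.symm, hne_cd.symm]) s(c,d) (by simp [Sym2.eq_swap]) hmem3
  have hdb : ¬ G'.Reachable d b :=
    no_reach_of_path htree s (Walk.cons hcd.symm (Walk.cons hbc.symm Walk.nil))
      (by simp [Walk.isPath_def, hne_bc.symm, hne_bd.symm, hne_cd.symm]) s(c,d)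
      (by simp [Sym2.eq_swap]) hmem3
  have hdc : ¬ G'.Reachable d c :=
    no_reach_of_path htree s (Walk.cons hcd.symm Walk.nil)
      (by simp [Walk.isPath_def, hne_cd.symm]) s(c,d) (by simp [Sym2.eq_swap]) hmem3
  -- the test vector
  set u : Fin n → ℝ := fun v => if G'.Reachable v a then 1 else if G'.Reachable v b then 2/5
    else if G'.Reachable v c then -2/5 else -1 with hu
  have hua : u a = 1 := by simp only [hu]; rw [if_pos (Reachable.refl a)]
  have hub : u b = 2/5 := by simp only [hu]; rw [if_neg hba, if_pos (Reachable.refl b)]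
  have huc : u c = -2/5 := by
    simp only [hu]; rw [if_neg hca, if_neg hcb, if_pos (Reachable.refl c)]
  have hud : u d = -1 := by simp only [hu]; rw [if_neg hda, if_neg hdb, if_neg hdc]
  have hsame : ∀ i j : Fin n, G'.Adj i j → u i = u j := by
    intro i j hij
    have hr : G'.Reachable i j := hij.reachable
    simp only [hu]
    by_cases h1 : G'.Reachable j a
    · rw [if_pos (hr.trans h1), if_pos h1]
    · rw [if_neg (fun h => h1 (hr.symm.trans h)), if_neg h1]
      by_cases h2 : G'.Reachable j b
      · rw [if_pos (hr.trans h2), if_pos h2]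
      · rw [if_neg (fun h => h2 (hr.symm.trans h)), if_neg h2]
        by_cases h3 : G'.Reachable j c
        · rw [if_pos (hr.trans h3), if_pos h3]
        · rw [if_neg (fun h => h3 (hr.symm.trans h)), if_neg h3]
  set m : ℝ := (∑ v, u v) / n with hm
  set w : Fin n → ℝ := fun v => u v - m with hw
  have hnR : (n : ℝ) ≠ 0 := Nat.cast_ne_zero.mpr (by omega)
  have hw0 : ∑ v, w v = 0 := by
    simp only [hw, Finset.sum_sub_distrib, Finset.sum_const, Finset.card_univ,
      Fintype.card_fin, nsmul_eq_mul, hm]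
    field_simp
    ring
  have hray := rayleigh_bound (by omega) G hconn lam2
    (fun μ hμ h => hlam2.2 ⟨hμ, h⟩) w hw0
  -- edge values of w
  have hwdiff : ∀ i j : Fin n, w i - w j = u i - u j := by
    intro i j; simp only [hw]; ring
  -- quadratic form bound
  have hQform : w ⬝ᵥ ((G.lapMatrix ℝ) *ᵥ w)
      = (∑ i, ∑ j, if G.Adj i j then (w i - w j)^2 else 0)/2 := by
    rw [← Matrix.toLinearMap₂'_apply', lapMatrix_toLinearMap₂']
  have hkey : ∀ i j : Fin n, (if G.Adj i j then (w i - w j)^2 else 0) ≤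
      (if (i = a ∧ j = b) ∨ (i = b ∧ j = a) then (9:ℝ)/25 else 0)
    + (if (i = b ∧ j = c) ∨ (i = c ∧ j = b) then 16/25 else 0)
    + (if (i = c ∧ j = d) ∨ (i = d ∧ j = c) then 9/25 else 0) := by
    intro i j
    have t1 : (0:ℝ) ≤ if (i = a ∧ j = b) ∨ (i = b ∧ j = a) then (9:ℝ)/25 else 0 := by positivity
    have t2 : (0:ℝ) ≤ if (i = b ∧ j = c) ∨ (i = c ∧ j = b) then (16:ℝ)/25 else 0 := by positivity
    have t3 : (0:ℝ) ≤ if (i = c ∧ j = d) ∨ (i = d ∧ j = c) then (9:ℝ)/25 else 0 := by positivity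
    by_cases hadj : G.Adj i j
    swap
    · rw [if_neg hadj]; linarith
    rw [if_pos hadj]
    by_cases h1 : (i = a ∧ j = b) ∨ (i = b ∧ j = a)
    · have hval : (w i - w j)^2 = 9/25 := by
        rcases h1 with ⟨rfl, rfl⟩ | ⟨rfl, rfl⟩ <;> rw [hwdiff] <;>
          rw [hua, hub] <;> norm_num
      rw [hval, if_pos h1]; linarith
    by_cases h2 : (i = b ∧ j = c) ∨ (i = c ∧ j = b)
    · have hval : (w i - w j)^2 = 16/25 := by
        rcases h2 with ⟨rfl, rfl⟩ | ⟨rfl, rfl⟩ <;> rw [hwdiff] <;>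
          rw [hub, huc] <;> norm_num
      rw [hval, if_pos h2]; linarith
    by_cases h3 : (i = c ∧ j = d) ∨ (i = d ∧ j = c)
    · have hval : (w i - w j)^2 = 9/25 := by
        rcases h3 with ⟨rfl, rfl⟩ | ⟨rfl, rfl⟩ <;> rw [hwdiff] <;>
          rw [huc, hud] <;> norm_num
      rw [hval, if_pos h3]; linarith
    · have hadj' : G'.Adj i j := by
        rw [hG', SimpleGraph.deleteEdges_adj]
        refine ⟨hadj, ?_⟩
        simp only [hs, Set.mem_insert_iff, Set.mem_singleton_iff, Sym2.eq_iff]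
        push_neg
        push_neg at h1 h2 h3
        exact ⟨h1, h2, h3⟩
      have : w i - w j = 0 := by rw [hwdiff, hsame i j hadj', sub_self]
      rw [this]; norm_num; linarith
  have hQbound : w ⬝ᵥ ((G.lapMatrix ℝ) *ᵥ w) ≤ 34/25 := by
    rw [hQform]
    have hsum : ∑ i : Fin n, ∑ j : Fin n,
        ((if (i = a ∧ j = b) ∨ (i = b ∧ j = a) then (9:ℝ)/25 else 0)
        + (if (i = b ∧ j = c) ∨ (i = c ∧ j = b) then 16/25 else 0)
        + (if (i = c ∧ j = d) ∨ (i = d ∧ j = c) then 9/25 else 0)) = 68/25 := by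
      simp_rw [Finset.sum_add_distrib]
      rw [double_sum_pair a b hne_ab, double_sum_pair b c hne_bc, double_sum_pair c d hne_cd]
      norm_num
    have hle : (∑ i : Fin n, ∑ j : Fin n, if G.Adj i j then (w i - w j)^2 else 0) ≤ 68/25 := by
      calc (∑ i : Fin n, ∑ j : Fin n, if G.Adj i j then (w i - w j)^2 else 0)
          ≤ ∑ i : Fin n, ∑ j : Fin n,
            ((if (i = a ∧ j = b) ∨ (i = b ∧ j = a) then (9:ℝ)/25 else 0)
            + (if (i = b ∧ j = c) ∨ (i = c ∧ j = b) then 16/25 else 0)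
            + (if (i = c ∧ j = d) ∨ (i = d ∧ j = c) then 9/25 else 0)) :=
            Finset.sum_le_sum fun i _ => Finset.sum_le_sum fun j _ => hkey i j
        _ = 68/25 := hsum
    linarith
  -- lower bound on the norm
  have hnorm : (58:ℝ)/25 ≤ ∑ v, (w v)^2 := by
    have hsub : ({a, b, c, d} : Finset (Fin n)) ⊆ univ := Finset.subset_univ _
    have hmono := Finset.sum_le_sum_of_subset_of_nonneg hsub
      (fun i _ _ => sq_nonneg (w i))
    have hsum4 : ∑ v ∈ ({a,b,c,d} : Finset (Fin n)), (w v)^2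
        = (w a)^2 + (w b)^2 + (w c)^2 + (w d)^2 := by
      rw [show ({a,b,c,d} : Finset (Fin n)) = insert a (insert b (insert c ({d} : Finset (Fin n)))) from rfl]
      rw [Finset.sum_insert (by simp [hne_ab, hne_ac, hne_ad]),
        Finset.sum_insert (by simp [hne_bc, hne_bd]),
        Finset.sum_insert (by simp [hne_cd]), Finset.sum_singleton]
      ring
    have hwa : w a = 1 - m := by simp only [hw]; rw [hua]
    have hwb : w b = 2/5 - m := by simp only [hw]; rw [hub]
    have hwc : w c = -2/5 - m := by simp only [hw]; rw [huc]
    have hwd : w d = -1 - m := by simp only [hw]; rw [hud]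
    rw [hsum4, hwa, hwb, hwc, hwd] at hmono
    nlinarith [sq_nonneg m, hmono]
  -- conclude
  by_contra hcon
  push_neg at hcon
  have h59 : (0.59 : ℝ) ≤ lam2 := hcon
  nlinarith [hray, hQbound, hnorm, h59]
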